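/- arXiv:2407.03048 — 4 statements merged into one kernel-verified Lean document; each statement's English description precedes it below -/
import Mathlib

section
/- Every finitely generated ideal of the ring of adeles of a number field (the restricted product of the completions K_v with respect to the rings of integers O_v over all places) is principal; in particular the Picard group of the adele ring is trivial. -/
open IsDedekindDomain IsDedekindDomain.HeightOneSpectrum

section PiFields

/-- A product of fields is a Bézout ring. -/
theorem isBezout_pi_fields {ι : Type*} (F : ι → Type*) [∀ i, Field (F i)] :
    IsBezout (∀ i, F i) := by
  classical
  rw [IsBezout.iff_span_pair_isPrincipal]
  intro a b
  refine ⟨⟨fun i => if a i ≠ 0 then a i else b i, ?_⟩⟩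
  rw [Ideal.submodule_span_eq]
  have ha : a ∈ Ideal.span ({fun i => if a i ≠ 0 then a i else b i} : Set (∀ i, F i)) := by
    rw [Ideal.mem_span_singleton']
    exact ⟨fun i => if a i ≠ 0 then 1 else 0,
      funext fun i => by by_cases h : a i = 0 <;> simp [h]⟩
  have hb : b ∈ Ideal.span ({fun i => if a i ≠ 0 then a i else b i} : Set (∀ i, F i)) := by
    rw [Ideal.mem_span_singleton']
    exact ⟨fun i => if a i ≠ 0 then b i / a i else 1,
      funext fun i => by by_cases h : a i = 0 <;> simp [h, div_mul_cancel₀]⟩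
  apply le_antisymm
  · rw [Ideal.span_le]
    intro x hx
    simp only [Set.mem_insert_iff, Set.mem_singleton_iff] at hx
    rcases hx with rfl | rfl
    · exact ha
    · exact hb
  · rw [Ideal.span_singleton_le_iff_mem, Ideal.mem_span_pair]
    exact ⟨fun i => if a i ≠ 0 then 1 else 0, fun i => if a i ≠ 0 then 0 else 1,
      funext fun i => by by_cases h : a i = 0 <;> simp [h]⟩

end PiFields

section FiniteAdele

variable (R : Type*) (K : Type*) [CommRing R] [IsDedekindDomain R] [Field K]
  [Algebra R K] [IsFractionRing R K]

/-- The finite adele ring is a Bézout ring: the ideal `(a, b)` is generated by the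
adele whose component at each place `v` is the one of `a v`, `b v` with the smaller
additive valuation (larger multiplicative valuation). -/
theorem isBezout_finiteAdeleRing : IsBezout (FiniteAdeleRing R K) := by
  classical
  rw [IsBezout.iff_span_pair_isPrincipal]
  intro a b
  obtain ⟨c, hva, hvb, hmem⟩ :
      ∃ c : FiniteAdeleRing R K,
        (∀ v, Valued.v (a.1 v) ≤ Valued.v (c.1 v)) ∧
        (∀ v, Valued.v (b.1 v) ≤ Valued.v (c.1 v)) ∧
        c ∈ Ideal.span ({a, b} : Set (FiniteAdeleRing R K)) := by
    have hc : ∀ᶠ v in Filter.cofinite,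
        (fun v => if Valued.v (b.1 v) ≤ Valued.v (a.1 v) then a.1 v else b.1 v :
          ∀ v : HeightOneSpectrum R, adicCompletion K v) v ∈ adicCompletionIntegers K v := by
      refine Filter.eventually_cofinite.2 (Set.Finite.subset (Set.Finite.union
        (Filter.eventually_cofinite.1 a.2) (Filter.eventually_cofinite.1 b.2)) ?_)
      intro v hv
      simp only [Set.mem_compl_iff, Set.mem_setOf_eq, Set.mem_union] at hv ⊢
      by_contra hcon
      push_neg at hcon
      apply hv
      split_ifs
      exacts [hcon.1, hcon.2]
    refine ⟨⟨_, hc⟩, ?_, ?_, ?_⟩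
    · intro v
      dsimp only
      split_ifs with h
      · exact le_rfl
      · exact (not_le.mp h).le
    · intro v
      dsimp only
      split_ifs with h
      · exact h
      · exact le_rfl
    · refine Ideal.mem_span_pair.2 ?_
      refine ⟨⟨fun v => if Valued.v (b.1 v) ≤ Valued.v (a.1 v) then 1 else 0, ?_⟩,
        ⟨fun v => if Valued.v (b.1 v) ≤ Valued.v (a.1 v) then 0 else 1, ?_⟩, ?_⟩
      · refine Filter.eventually_cofinite.2 (Set.Finite.subset Set.finite_empty ?_)
        intro v hv
        refine absurd ?_ hv
        show (if Valued.v (b.1 v) ≤ Valued.v (a.1 v) then (1 : adicCompletion K v) else 0)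
          ∈ adicCompletionIntegers K v
        rw [mem_adicCompletionIntegers]
        split_ifs
        · exact le_of_eq (map_one _)
        · rw [map_zero]; exact zero_le'
      · refine Filter.eventually_cofinite.2 (Set.Finite.subset Set.finite_empty ?_)
        intro v hv
        refine absurd ?_ hv
        show (if Valued.v (b.1 v) ≤ Valued.v (a.1 v) then (0 : adicCompletion K v) else 1)
          ∈ adicCompletionIntegers K v
        rw [mem_adicCompletionIntegers]
        split_ifs
        · rw [map_zero]; exact zero_le'
        · exact le_of_eq (map_one _)
      · apply Subtype.ext
        funext v
        show (if Valued.v (b.1 v) ≤ Valued.v (a.1 v) then (1 : adicCompletion K v) else 0)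
              * a.1 v
            + (if Valued.v (b.1 v) ≤ Valued.v (a.1 v) then (0 : adicCompletion K v) else 1)
              * b.1 v
          = if Valued.v (b.1 v) ≤ Valued.v (a.1 v) then a.1 v else b.1 v
        split_ifs <;> simp
  -- any element whose valuation is everywhere at most that of `c` lies in `(c)`
  have key : ∀ x : FiniteAdeleRing R K, (∀ v, Valued.v (x.1 v) ≤ Valued.v (c.1 v)) →
      x ∈ Ideal.span ({c} : Set (FiniteAdeleRing R K)) := by
    intro x hx
    rw [Ideal.mem_span_singleton']
    have hrint : ∀ v, Valued.v (x.1 v * (c.1 v)⁻¹) ≤ 1 := by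
      intro v
      rw [map_mul, map_inv₀]
      rcases eq_or_ne (Valued.v (c.1 v)) 0 with h0 | h0
      · have : Valued.v (x.1 v) = 0 := le_antisymm (h0 ▸ hx v) zero_le'
        rw [this, zero_mul]
        exact zero_le'
      · calc Valued.v (x.1 v) * (Valued.v (c.1 v))⁻¹
            ≤ Valued.v (c.1 v) * (Valued.v (c.1 v))⁻¹ := mul_le_mul_left (hx v) _
          _ = 1 := mul_inv_cancel₀ h0
    refine ⟨⟨fun v => x.1 v * (c.1 v)⁻¹, ?_⟩, ?_⟩
    · refine Filter.eventually_cofinite.2 (Set.Finite.subset Set.finite_empty ?_)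
      intro v hv
      exact absurd ((mem_adicCompletionIntegers R K v).2 (hrint v)) hv
    · apply Subtype.ext
      funext v
      show x.1 v * (c.1 v)⁻¹ * c.1 v = x.1 v
      rcases eq_or_ne (c.1 v) 0 with h0 | h0
      · have hx0 : x.1 v = 0 := by
          have h1 := hx v
          rw [h0, map_zero] at h1
          rw [← Valuation.zero_iff (Valued.v)]
          exact le_antisymm h1 zero_le'
        rw [hx0, zero_mul, zero_mul]
      · rw [mul_assoc, inv_mul_cancel₀ h0, mul_one]
  refine ⟨⟨c, ?_⟩⟩
  rw [Ideal.submodule_span_eq]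
  apply le_antisymm
  · rw [Ideal.span_le]
    intro x hx
    simp only [Set.mem_insert_iff, Set.mem_singleton_iff] at hx
    rcases hx with rfl | rfl
    · exact key _ hva
    · exact key _ hvb
  · rwa [Ideal.span_singleton_le_iff_mem]

end FiniteAdele

section ProdBezout

/-- A product of two Bézout rings is Bézout. -/
theorem isBezout_prod (R S : Type*) [CommRing R] [CommRing S] [IsBezout R] [IsBezout S] :
    IsBezout (R × S) := by
  rw [IsBezout.iff_span_pair_isPrincipal]
  intro a b
  obtain ⟨c₁, hc₁⟩ := IsBezout.iff_span_pair_isPrincipal.mp ‹IsBezout R› a.1 b.1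
  obtain ⟨c₂, hc₂⟩ := IsBezout.iff_span_pair_isPrincipal.mp ‹IsBezout S› a.2 b.2
  rw [Ideal.submodule_span_eq] at hc₁ hc₂
  have ha1 : a.1 ∈ Ideal.span {c₁} := by
    rw [← hc₁]; exact Ideal.subset_span (by simp)
  have hb1 : b.1 ∈ Ideal.span {c₁} := by
    rw [← hc₁]; exact Ideal.subset_span (by simp)
  have ha2 : a.2 ∈ Ideal.span {c₂} := by
    rw [← hc₂]; exact Ideal.subset_span (by simp)
  have hb2 : b.2 ∈ Ideal.span {c₂} := by
    rw [← hc₂]; exact Ideal.subset_span (by simp)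
  have hc1m : c₁ ∈ Ideal.span {a.1, b.1} := by rw [hc₁]; exact Ideal.subset_span (by simp)
  have hc2m : c₂ ∈ Ideal.span {a.2, b.2} := by rw [hc₂]; exact Ideal.subset_span (by simp)
  refine ⟨⟨(c₁, c₂), ?_⟩⟩
  rw [Ideal.submodule_span_eq]
  apply le_antisymm
  · rw [Ideal.span_le]
    intro x hx
    simp only [Set.mem_insert_iff, Set.mem_singleton_iff] at hx
    have key : ∀ y : R × S, y.1 ∈ Ideal.span {c₁} → y.2 ∈ Ideal.span {c₂} →
        y ∈ Ideal.span ({(c₁, c₂)} : Set (R × S)) := by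
      intro y h1 h2
      rw [Ideal.mem_span_singleton']
      obtain ⟨r₁, hr₁⟩ := Ideal.mem_span_singleton'.1 h1
      obtain ⟨r₂, hr₂⟩ := Ideal.mem_span_singleton'.1 h2
      exact ⟨(r₁, r₂), Prod.ext hr₁ hr₂⟩
    rcases hx with rfl | rfl
    · exact key _ ha1 ha2
    · exact key _ hb1 hb2
  · rw [Ideal.span_singleton_le_iff_mem, Ideal.mem_span_pair]
    obtain ⟨u₁, w₁, h₁⟩ := Ideal.mem_span_pair.1 hc1m
    obtain ⟨u₂, w₂, h₂⟩ := Ideal.mem_span_pair.1 hc2m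
    exact ⟨(u₁, u₂), (w₁, w₂), Prod.ext h₁ h₂⟩

end ProdBezout

theorem adele_ring_fg_ideal_isPrincipal (K : Type*) [Field K] [NumberField K]
    (I : Ideal (NumberField.AdeleRing (NumberField.RingOfIntegers K) K)) (hI : I.FG) : I.IsPrincipal := by
  have h1 : IsBezout (NumberField.InfiniteAdeleRing K) :=
    isBezout_pi_fields _
  have h2 : IsBezout (FiniteAdeleRing (NumberField.RingOfIntegers K) K) :=
    isBezout_finiteAdeleRing _ _
  have h3 : IsBezout (NumberField.AdeleRing (NumberField.RingOfIntegers K) K) :=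
    isBezout_prod (NumberField.InfiniteAdeleRing K)
      (FiniteAdeleRing (NumberField.RingOfIntegers K) K)
  exact IsBezout.isPrincipal_of_FG I hI
end

section
/- Let I be an index set and for each i ∈ I let X_i be a topological space with subspaces Z_i ⊆ Y_i ⊆ X_i. If the restricted product ∏(X_i, Z_i) is nonempty, then the natural inclusion ∏(X_i, Z_i) ↪ ∏(X_i, Y_i) is continuous with dense image. -/
/-!
STATEMENT 1: Let `I` be an index set and for each `i ∈ I` let `X_i` be a
topological space with subspaces `Z_i ⊆ Y_i ⊆ X_i`.  If the restricted product
`∏(X_i, Z_i)` is nonempty, then the natural inclusion `∏(X_i, Z_i) ↪ ∏(X_i, Y_i)`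
is continuous with dense image.
-/

/-- The restricted product of the spaces `X i` with respect to the subsets `U i`:
tuples `(x i)` with `x i ∈ U i` for all but finitely many `i`. -/
def RestrictedProduct' {I : Type*} (X : I → Type*) (U : (i : I) → Set (X i)) : Type _ :=
  {x : (i : I) → X i // ∀ᶠ i in Filter.cofinite, x i ∈ U i}

/-- The restricted product topology: the finest topology such that for every finite
`J ⊆ I` the inclusion of `∏_{i ∈ J} X i × ∏_{i ∉ J} U i` (with the product
topology) is continuous. -/
instance restrictedProductTopology {I : Type*} (X : I → Type*)
    [∀ i, TopologicalSpace (X i)] (U : (i : I) → Set (X i)) :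
    TopologicalSpace (RestrictedProduct' X U) :=
  ⨆ J : Finset I,
    TopologicalSpace.coinduced
      (fun x : {x : (i : I) → X i // ∀ i ∉ J, x i ∈ U i} =>
        (⟨x.1, by
          rw [Filter.eventually_cofinite]
          exact J.finite_toSet.subset fun i hi => by
            by_contra h
            exact hi (x.2 i h)⟩ : RestrictedProduct' X U))
      inferInstance

section aux

variable {I : Type*} {X : I → Type*} [∀ i, TopologicalSpace (X i)] {U : (i : I) → Set (X i)}

/-- The inclusion of the `J`-th piece of the restricted product. -/
def rpIncl (U : (i : I) → Set (X i)) (J : Finset I)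
    (x : {x : (i : I) → X i // ∀ i ∉ J, x i ∈ U i}) : RestrictedProduct' X U :=
  ⟨x.1, by
    rw [Filter.eventually_cofinite]
    exact J.finite_toSet.subset fun i hi => by
      by_contra h
      exact hi (x.2 i h)⟩

lemma rpTopology_eq :
    restrictedProductTopology X U =
      ⨆ J : Finset I, TopologicalSpace.coinduced (rpIncl U J) inferInstance := rfl

lemma continuous_rp_dom {β : Type*} [TopologicalSpace β] {f : RestrictedProduct' X U → β} :
    Continuous f ↔ ∀ J : Finset I, Continuous (f ∘ rpIncl U J) := by
  rw [show (restrictedProductTopology X U) = _ from rpTopology_eq (U := U)]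
  simp only [continuous_iSup_dom, continuous_coinduced_dom]

end aux

theorem restrictedProduct_inclusion_continuous_denseRange
    {I : Type*} (X : I → Type*) [∀ i, TopologicalSpace (X i)]
    (Y Z : (i : I) → Set (X i)) (hZY : ∀ i, Z i ⊆ Y i)
    (hne : Nonempty (RestrictedProduct' X Z)) :
    Continuous (fun x : RestrictedProduct' X Z =>
      (⟨x.1, x.2.mono fun i hi => hZY i hi⟩ : RestrictedProduct' X Y)) ∧
    DenseRange (fun x : RestrictedProduct' X Z =>
      (⟨x.1, x.2.mono fun i hi => hZY i hi⟩ : RestrictedProduct' X Y)) := by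
  classical
  constructor
  · -- continuity
    rw [continuous_rp_dom]
    intro J
    exact Continuous.subtype_mk continuous_subtype_val _
  · -- dense range
    intro y
    rw [mem_closure_iff]
    intro O hO hyO
    obtain ⟨z₀⟩ := hne
    obtain ⟨W, hW, hWeq⟩ := isOpen_induced_iff.1 hO
    have hyW : y.1 ∈ W := by
      have : y ∈ Subtype.val ⁻¹' W := by rw [hWeq]; exact hyO
      exact this
    obtain ⟨F, u, hu, hpi⟩ := isOpen_pi_iff.1 hW y.1 hyW
    -- the approximating point: agrees with `y` on `F`, with `z₀` elsewhere
    set zfun : (i : I) → X i := fun i => if i ∈ F then y.1 i else z₀.1 i with hzfun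
    have hzmem : ∀ᶠ i in Filter.cofinite, zfun i ∈ Z i := by
      have h1 : ∀ᶠ i in Filter.cofinite, i ∉ F := F.finite_toSet.eventually_cofinite_notMem
      filter_upwards [h1, z₀.2] with i hi hz
      simp only [hzfun, if_neg hi]
      exact hz
    set zr : RestrictedProduct' X Z := ⟨zfun, hzmem⟩ with hzr
    refine ⟨⟨zfun, hzmem.mono fun i hi => hZY i hi⟩, ?_, ⟨zr, rfl⟩⟩
    have hzW : zfun ∈ W := by
      apply hpi
      rw [Set.mem_pi]
      intro i hi
      have hi' : i ∈ F := hi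
      simp only [hzfun, if_pos hi']
      exact (hu i hi').2
    show (⟨zfun, _⟩ : {x : (i : I) → X i // ∀ᶠ i in Filter.cofinite, x i ∈ Y i}) ∈ O
    rw [← hWeq]
    exact hzW
end

section
/- If K is a number field, then for every prime number p there exist infinitely many finite places v of K such that the unit group O_v^× of the completion's valuation ring is not p-divisible. Consequently ρ(K) = {1}, i.e., the only positive integer n such that x ↦ x^n is surjective on O_v^× for all places v is n = 1. -/
set_option synthInstance.maxHeartbeats 1000000
set_option maxHeartbeats 1000000

open IsDedekindDomain IsDedekindDomain.HeightOneSpectrum NumberField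

/-- Span-divisibility of principal ideals in a Dedekind domain. -/
lemma aux_span_dvd_span_iff {R : Type*} [CommRing R] [IsDedekindDomain R] {a b : R} :
    Ideal.span {a} ∣ Ideal.span {b} ↔ a ∣ b := by
  rw [Ideal.dvd_iff_le, Ideal.span_le, Set.singleton_subset_iff, SetLike.mem_coe,
    Ideal.mem_span_singleton]

/-- Any element of the fraction field which is `v`-integral can be written with a
denominator outside `v`. -/
lemma aux_exists_rep {R : Type*} [CommRing R] [IsDedekindDomain R] {K : Type*} [Field K]
    [Algebra R K] [IsFractionRing R K] (v : HeightOneSpectrum R) {b : K}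
    (hb : v.valuation K b ≤ 1) :
    ∃ r d : R, d ∉ v.asIdeal ∧ algebraMap R K d * b = algebraMap R K r := by
  classical
  obtain ⟨c, d0, hd0, rfl⟩ := IsFractionRing.div_surjective (A := R) b
  have hd0' : d0 ≠ 0 := nonZeroDivisors.ne_zero hd0
  by_cases hc : c = 0
  · exact ⟨0, 1, fun h => v.isPrime.ne_top (Ideal.eq_top_of_isUnit_mem _ h isUnit_one),
      by simp [hc]⟩
  set n := (Associates.mk v.asIdeal).count (Associates.mk (Ideal.span {d0})).factors with hn
  have hd0v : v.intValuationDef d0 = Multiplicative.ofAdd (-(n : ℤ)) :=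
    v.intValuationDef_if_neg hd0'
  have hvd0 : v.asIdeal ^ n ∣ Ideal.span {d0} :=
    (v.intValuation_le_pow_iff_dvd d0 n).mp (le_of_eq hd0v)
  have hcled : v.intValuationDef c ≤ v.intValuationDef d0 := by
    have hd0pos : (0 : WithZero (Multiplicative ℤ)) < v.intValuationDef d0 := by
      rw [hd0v]; exact WithZero.zero_lt_coe _
    rw [map_div₀, v.valuation_of_algebraMap, v.valuation_of_algebraMap,
      v.intValuation_apply, v.intValuation_apply, div_le_one₀ hd0pos] at hb
    exact hb
  have hvc : v.asIdeal ^ n ∣ Ideal.span {c} :=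
    (v.intValuation_le_pow_iff_dvd c n).mp (hcled.trans (le_of_eq hd0v))
  obtain ⟨J, hJ⟩ := hvd0
  have hJv : ¬ J ≤ v.asIdeal := by
    intro hle
    have hdd : v.asIdeal ^ (n + 1) ∣ Ideal.span {d0} := by
      rw [hJ, pow_succ]
      exact mul_dvd_mul_left _ (Ideal.dvd_iff_le.mpr hle)
    have h2 := (v.intValuation_le_pow_iff_dvd d0 (n + 1)).mpr hdd
    rw [intValuation_apply, hd0v] at h2
    change WithZero.exp _ ≤ WithZero.exp _ at h2
    rw [WithZero.exp_le_exp] at h2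
    push_cast at h2
    linarith
  obtain ⟨d, hdJ, hdv⟩ := SetLike.not_le_iff_exists.mp hJv
  obtain ⟨C, hC⟩ := hvc
  have hJd : J ∣ Ideal.span {d} := Ideal.dvd_iff_le.mpr
    (by rw [Ideal.span_le, Set.singleton_subset_iff]; exact hdJ)
  have hdvd : Ideal.span {d0} ∣ Ideal.span {d * c} := by
    rw [← Ideal.span_singleton_mul_span_singleton, hJ, hC, mul_comm (Ideal.span {d}),
      mul_assoc]
    exact mul_dvd_mul_left _ (hJd.trans (dvd_mul_left _ _))
  obtain ⟨r, hr⟩ := aux_span_dvd_span_iff.mp hdvd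
  refine ⟨r, d, hdv, ?_⟩
  have hd0K : algebraMap R K d0 ≠ 0 :=
    (map_ne_zero_iff _ (IsFractionRing.injective R K)).mpr hd0'
  field_simp
  rw [← map_mul, ← map_mul, hr, mul_comm]

/-- In the residue field at a place above a prime `q ≡ 1 mod p`, there is an element
which is not a `p`-th power. -/
lemma aux_exists_non_pth_power (K : Type*) [Field K] [NumberField K] (p q : ℕ) (hp : p.Prime)
    (hq : q.Prime) (hq1 : q ≡ 1 [MOD p]) (v : HeightOneSpectrum (RingOfIntegers K))
    (hqv : (q : RingOfIntegers K) ∈ v.asIdeal) :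
    ∃ a : RingOfIntegers K, a ∉ v.asIdeal ∧
      ∀ z : RingOfIntegers K ⧸ v.asIdeal, z ^ p ≠ Ideal.Quotient.mk v.asIdeal a := by
  classical
  letI : Field (RingOfIntegers K ⧸ v.asIdeal) := Ideal.Quotient.field v.asIdeal
  haveI : Fintype (RingOfIntegers K ⧸ v.asIdeal) :=
    @Fintype.ofFinite _ (Ideal.finiteQuotientOfFreeOfNeBot v.asIdeal v.ne_bot)
  haveI : Finite (RingOfIntegers K ⧸ v.asIdeal)ˣ :=
    Finite.of_injective (fun u => (u : RingOfIntegers K ⧸ v.asIdeal)) (fun _ _ h => Units.ext h)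
  have hchar : ringChar (RingOfIntegers K ⧸ v.asIdeal) = q := by
    have hq0 : (q : RingOfIntegers K ⧸ v.asIdeal) = 0 := by
      rw [← map_natCast (Ideal.Quotient.mk v.asIdeal) q, Ideal.Quotient.eq_zero_iff_mem]
      exact hqv
    have hdvd : ringChar (RingOfIntegers K ⧸ v.asIdeal) ∣ q := ringChar.dvd hq0
    rcases (Nat.Prime.eq_one_or_self_of_dvd hq _ hdvd) with h | h
    · exact absurd h (CharP.ringChar_ne_one)
    · exact h
  obtain ⟨m, hm, hcard⟩ := FiniteField.card (RingOfIntegers K ⧸ v.asIdeal)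
    (ringChar (RingOfIntegers K ⧸ v.asIdeal))
  rw [hchar] at hcard
  have hpcard : p ∣ Nat.card (RingOfIntegers K ⧸ v.asIdeal)ˣ := by
    rw [Nat.card_units, ← Fintype.card_eq_nat_card, hcard]
    have hmod : q ^ (m : ℕ) ≡ 1 [MOD p] := by
      simpa using hq1.pow (m : ℕ)
    exact (Nat.modEq_iff_dvd' (Nat.one_le_pow _ _ hq.pos)).mp hmod.symm
  haveI : Fact p.Prime := ⟨hp⟩
  obtain ⟨g, hg⟩ := exists_prime_orderOf_dvd_card' (G := (RingOfIntegers K ⧸ v.asIdeal)ˣ) p hpcard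
  have hns : ¬ Function.Surjective (fun x : (RingOfIntegers K ⧸ v.asIdeal)ˣ => x ^ p) := by
    intro hsurj
    have hinj : Function.Injective (fun x : (RingOfIntegers K ⧸ v.asIdeal)ˣ => x ^ p) :=
      Finite.injective_iff_surjective.mpr hsurj
    have hgone : g = 1 := hinj (by simp [← hg, pow_orderOf_eq_one g])
    rw [hgone, orderOf_one] at hg
    exact hp.one_lt.ne' hg.symm
  rw [Function.Surjective] at hns
  push_neg at hns
  obtain ⟨A, hA⟩ := hns
  obtain ⟨a, ha⟩ := Ideal.Quotient.mk_surjective (I := v.asIdeal) (A : RingOfIntegers K ⧸ v.asIdeal)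
  refine ⟨a, ?_, fun z hz => ?_⟩
  · intro hmem
    rw [← Ideal.Quotient.eq_zero_iff_mem] at hmem
    rw [hmem] at ha
    exact Units.ne_zero A ha.symm
  · rw [ha] at hz
    have hz0 : z ≠ 0 := by
      intro h
      rw [h, zero_pow hp.ne_zero] at hz
      exact Units.ne_zero A hz.symm
    exact hA (Units.mk0 z hz0) (by ext; simpa using hz)

lemma aux_val_eq_one_of_not_mem (K : Type*) [Field K] [NumberField K]
    (v : HeightOneSpectrum (RingOfIntegers K)) {a : RingOfIntegers K} (hav : a ∉ v.asIdeal) :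
    v.valuation K (algebraMap (RingOfIntegers K) K a) = 1 := by
  refine le_antisymm (v.valuation_le_one (K := K) a) (not_lt.mp fun hlt => ?_)
  exact hav (Ideal.dvd_span_singleton.mp ((v.valuation_lt_one_iff_dvd (K := K) a).mp hlt))

/-- If `a` is not a `p`-th power modulo `v`, then the `p`-power map on the units of the
valuation ring of the completion at `v` is not surjective. -/
lemma aux_bad_place (K : Type*) [Field K] [NumberField K] {p : ℕ} (hp : p.Prime)
    (v : HeightOneSpectrum (RingOfIntegers K)) {a : RingOfIntegers K}
    (hav : a ∉ v.asIdeal)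
    (ha : ∀ z : RingOfIntegers K ⧸ v.asIdeal,
      z ^ p ≠ Ideal.Quotient.mk v.asIdeal a) :
    ¬ Function.Surjective fun x : (↥(v.adicCompletionIntegers K))ˣ => x ^ p := by
  intro hsurj
  have hcoe : ∀ x : K, (x : v.adicCompletion K) = algebraMap K (v.adicCompletion K) x :=
    fun x => (congrFun (algebraMap_adicCompletion
      (R := NumberField.RingOfIntegers K) (K := K) (v := v)) x).symm
  set aK : K := algebraMap (RingOfIntegers K) K a with haK
  have hvala : v.valuation K aK = 1 := aux_val_eq_one_of_not_mem K v hav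
  set α : v.adicCompletion K := (aK : v.adicCompletion K) with hα
  have hvalα : Valued.v α = 1 := by
    rw [hα, v.valuedAdicCompletion_eq_valuation' aK, hvala]
  have hα0 : α ≠ 0 := by
    intro h
    rw [h, map_zero] at hvalα
    exact zero_ne_one hvalα
  have hmem1 : α ∈ v.adicCompletionIntegers K := by
    rw [mem_adicCompletionIntegers, hvalα]
  have hmem2 : α⁻¹ ∈ v.adicCompletionIntegers K := by
    rw [mem_adicCompletionIntegers, map_inv₀, hvalα, inv_one]
  set u : (↥(v.adicCompletionIntegers K))ˣ :=
    ⟨⟨α, hmem1⟩, ⟨α⁻¹, hmem2⟩, Subtype.ext (by simpa using mul_inv_cancel₀ hα0),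
      Subtype.ext (by simpa using inv_mul_cancel₀ hα0)⟩ with hu
  obtain ⟨w, hw⟩ := hsurj u
  set W : v.adicCompletion K := ((w : ↥(v.adicCompletionIntegers K)) : v.adicCompletion K)
    with hW
  have hW1 : Valued.v W ≤ 1 := (mem_adicCompletionIntegers _ K v).mp (SetLike.coe_mem _)
  have hWp : W ^ p = α := by
    have h2 := congrArg (fun t : (↥(v.adicCompletionIntegers K))ˣ =>
      ((t : ↥(v.adicCompletionIntegers K)) : v.adicCompletion K)) hw
    simpa [hW, hu] using h2
  obtain ⟨b, hb⟩ : ∃ b : K, Valued.v ((b : v.adicCompletion K) - W) < 1 := by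
    letI : Valued K (WithZero (Multiplicative ℤ)) := v.adicValued
    have hd : DenseRange ((↑) : K → v.adicCompletion K) :=
      by
        convert denseRange_algebraMap (R := RingOfIntegers K) (K := K) (v := v) using 1
        funext x; exact hcoe x
    have hnhds : {y : v.adicCompletion K | Valued.v (y - W) < 1} ∈ nhds W := by
      rw [Valued.mem_nhds]
      exact ⟨1, by simp⟩
    obtain ⟨y, hy1, b, hb⟩ := mem_closure_iff_nhds.mp (hd W) _ hnhds
    exact ⟨b, by subst hb; exact hy1⟩
  have hb1 : Valued.v (b : v.adicCompletion K) ≤ 1 := by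
    have heq : (b : v.adicCompletion K) = ((b : v.adicCompletion K) - W) + W := by ring
    rw [heq]
    exact le_trans (Valued.v.map_add _ _) (max_le (le_of_lt hb) hW1)
  have hvb : v.valuation K b ≤ 1 := by
    rw [← v.valuedAdicCompletion_eq_valuation' b]; exact hb1
  have key : Valued.v ((b : v.adicCompletion K) ^ p - α) < 1 := by
    rw [← hWp, ← geom_sum₂_mul (b : v.adicCompletion K) W p, map_mul]
    have hsum : Valued.v (∑ i ∈ Finset.range p,
        (b : v.adicCompletion K) ^ i * W ^ (p - 1 - i)) ≤ 1 := by
      apply Valuation.map_sum_le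
      intro i _
      rw [map_mul, map_pow, map_pow]
      exact mul_le_one' (pow_le_one' hb1 _) (pow_le_one' hW1 _)
    calc Valued.v (∑ i ∈ Finset.range p, (b : v.adicCompletion K) ^ i * W ^ (p - 1 - i)) *
          Valued.v ((b : v.adicCompletion K) - W)
        ≤ 1 * Valued.v ((b : v.adicCompletion K) - W) := mul_le_mul_left hsum _
      _ = Valued.v ((b : v.adicCompletion K) - W) := one_mul _
      _ < 1 := hb
  have hK : v.valuation K (b ^ p - aK) < 1 := by
    rw [← v.valuedAdicCompletion_eq_valuation' (b ^ p - aK)]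
    have hco : ((b ^ p - aK : K) : v.adicCompletion K)
        = (b : v.adicCompletion K) ^ p - α := by
      rw [hcoe, hcoe, map_sub, map_pow, hα, hcoe]
    rwa [hco]
  obtain ⟨r, d, hdv, hrd⟩ := aux_exists_rep v hvb
  have hdval : v.valuation K (algebraMap (RingOfIntegers K) K d) = 1 :=
    aux_val_eq_one_of_not_mem K v hdv
  have hfin : v.valuation K (algebraMap (RingOfIntegers K) K (r ^ p - d ^ p * a)) < 1 := by
    have hexp : algebraMap (RingOfIntegers K) K (r ^ p - d ^ p * a)
        = (algebraMap (RingOfIntegers K) K d) ^ p * (b ^ p - aK) := by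
      rw [map_sub, map_pow, ← hrd, map_mul, map_pow, haK]
      ring
    rw [hexp, map_mul, map_pow, hdval, one_pow, one_mul]
    exact hK
  have hmemv : r ^ p - d ^ p * a ∈ v.asIdeal :=
    Ideal.dvd_span_singleton.mp ((v.valuation_lt_one_iff_dvd (K := K) _).mp hfin)
  classical
  letI : Field (RingOfIntegers K ⧸ v.asIdeal) := Ideal.Quotient.field v.asIdeal
  have hmk : (Ideal.Quotient.mk v.asIdeal r) ^ p
      = (Ideal.Quotient.mk v.asIdeal d) ^ p * Ideal.Quotient.mk v.asIdeal a := by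
    rw [← map_pow, ← map_pow, ← map_mul, Ideal.Quotient.eq]
    exact hmemv
  have hd0 : Ideal.Quotient.mk v.asIdeal d ≠ 0 :=
    fun h => hdv (Ideal.Quotient.eq_zero_iff_mem.mp h)
  refine ha (Ideal.Quotient.mk v.asIdeal r * (Ideal.Quotient.mk v.asIdeal d)⁻¹) ?_
  rw [mul_pow, hmk, inv_pow, mul_comm ((Ideal.Quotient.mk v.asIdeal d) ^ p), mul_assoc,
    mul_inv_cancel₀ (pow_ne_zero _ hd0), mul_one]

/-- Every rational prime lies below some finite place of `K`. -/
lemma aux_exists_place_above (K : Type*) [Field K] [NumberField K] {q : ℕ} (hq : q.Prime) :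
    ∃ v : HeightOneSpectrum (RingOfIntegers K), (q : RingOfIntegers K) ∈ v.asIdeal := by
  have hq0 : (q : RingOfIntegers K) ≠ 0 := Nat.cast_ne_zero.mpr hq.ne_zero
  have hspan_ne_bot : Ideal.span {(q : RingOfIntegers K)} ≠ ⊥ := by
    simpa [Ideal.span_singleton_eq_bot] using hq0
  have hnotunit : ¬ IsUnit (q : RingOfIntegers K) := by
    intro h
    obtain ⟨u, hu⟩ := h.exists_left_inv
    have hKq : (algebraMap (RingOfIntegers K) K u) * (q : K) = 1 := by
      have h2 := congrArg (algebraMap (RingOfIntegers K) K) hu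
      rwa [map_mul, map_natCast, map_one] at h2
    have hqK0 : (q : K) ≠ 0 := Nat.cast_ne_zero.mpr hq.ne_zero
    have hval : algebraMap (RingOfIntegers K) K u = algebraMap ℚ K ((q : ℚ)⁻¹) := by
      rw [map_inv₀, map_natCast]
      field_simp
      linear_combination hKq
    have hint : IsIntegral ℤ (algebraMap ℚ K ((q : ℚ)⁻¹)) := by
      rw [← hval]; exact RingOfIntegers.isIntegral_coe u
    have hint2 : IsIntegral ℤ ((q : ℚ)⁻¹) :=
      (isIntegral_algebraMap_iff (algebraMap ℚ K).injective).mp hint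
    obtain ⟨y, hy⟩ := IsIntegrallyClosed.isIntegral_iff.mp hint2
    have hyq : (y : ℚ) * q = 1 := by
      rw [show ((y : ℤ) : ℚ) = algebraMap ℤ ℚ y from rfl, hy]
      have hq0' : ((q : ℚ)) ≠ 0 := Nat.cast_ne_zero.mpr hq.ne_zero
      field_simp
    have hyqZ : y * (q : ℤ) = 1 := by exact_mod_cast hyq
    have hdvd : (q : ℤ) ∣ 1 := ⟨y, by linarith⟩
    have hle := Int.le_of_dvd one_pos hdvd
    have h2 : (2 : ℤ) ≤ q := by exact_mod_cast hq.two_le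
    linarith
  have hspan_ne_top : Ideal.span {(q : RingOfIntegers K)} ≠ ⊤ :=
    fun h => hnotunit (Ideal.span_singleton_eq_top.mp h)
  obtain ⟨M, hM, hle⟩ := Ideal.exists_le_maximal _ hspan_ne_top
  refine ⟨⟨M, hM.isPrime, ?_⟩, ?_⟩
  · intro hbot
    rw [hbot] at hle
    exact hspan_ne_bot (le_bot_iff.mp hle)
  · exact hle (Ideal.subset_span rfl)

/-- The set of places where the `p`-power map on local units fails to be surjective
is infinite. -/
lemma aux_bad_set_infinite (K : Type*) [Field K] [NumberField K] (p : ℕ) (hp : p.Prime) :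
    {v : HeightOneSpectrum (NumberField.RingOfIntegers K) |
        ¬ Function.Surjective fun x : (↥(v.adicCompletionIntegers K))ˣ => x ^ p}.Infinite := by
  classical
  set S := {q : ℕ | q.Prime ∧ q ≡ 1 [MOD p]} with hS
  have hSinf : S.Infinite := Nat.infinite_setOf_prime_modEq_one hp.ne_zero
  haveI : Infinite ↥S := hSinf.to_subtype
  have hex : ∀ s : ↥S, ∃ v : HeightOneSpectrum (RingOfIntegers K),
      ((s : ℕ) : RingOfIntegers K) ∈ v.asIdeal :=
    fun s => aux_exists_place_above K s.2.1
  refine Set.infinite_of_injective_forall_mem (f := fun s : ↥S => (hex s).choose) ?_ ?_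
  · intro s1 s2 heq
    by_contra hne
    have hqne : (s1 : ℕ) ≠ (s2 : ℕ) := fun h => hne (Subtype.ext h)
    have hcop : Nat.Coprime (s1 : ℕ) (s2 : ℕ) :=
      (Nat.coprime_primes s1.2.1 s2.2.1).mpr hqne
    have hcopZ : IsCoprime ((s1 : ℕ) : ℤ) ((s2 : ℕ) : ℤ) :=
      Nat.isCoprime_iff_coprime.mpr hcop
    have hcopR := hcopZ.map (algebraMap ℤ (RingOfIntegers K))
    obtain ⟨x, y, hxy⟩ := hcopR
    set v := (hex s1).choose with hv
    have h1 : ((s1 : ℕ) : RingOfIntegers K) ∈ v.asIdeal := (hex s1).choose_spec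
    have h2 : ((s2 : ℕ) : RingOfIntegers K) ∈ v.asIdeal := by
      have heq' : (hex s1).choose = (hex s2).choose := heq
      rw [hv, heq']; exact (hex s2).choose_spec
    have hone : (1 : RingOfIntegers K) ∈ v.asIdeal := by
      rw [← hxy]
      have e1 : algebraMap ℤ (RingOfIntegers K) ((s1 : ℕ) : ℤ)
          = ((s1 : ℕ) : RingOfIntegers K) := by push_cast; ring
      have e2 : algebraMap ℤ (RingOfIntegers K) ((s2 : ℕ) : ℤ)
          = ((s2 : ℕ) : RingOfIntegers K) := by push_cast; ring
      rw [e1, e2]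
      exact Ideal.add_mem _ (Ideal.mul_mem_left _ _ h1) (Ideal.mul_mem_left _ _ h2)
    exact v.isPrime.ne_top (Ideal.eq_top_iff_one _ |>.mpr hone)
  · intro s
    obtain ⟨a, hav, ha⟩ := aux_exists_non_pth_power K p (s : ℕ) hp s.2.1 s.2.2
      (hex s).choose (hex s).choose_spec
    exact aux_bad_place K hp (hex s).choose hav ha

theorem numberField_units_not_p_divisible_infinite_and_rho_trivial
    (K : Type*) [Field K] [NumberField K] (p : ℕ) (hp : p.Prime) :
    {v : HeightOneSpectrum (NumberField.RingOfIntegers K) |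
        ¬ Function.Surjective fun x : (↥(v.adicCompletionIntegers K))ˣ => x ^ p}.Infinite ∧
    ∀ n : ℕ, 0 < n →
      (∀ v : HeightOneSpectrum (NumberField.RingOfIntegers K),
        Function.Surjective fun x : (↥(v.adicCompletionIntegers K))ˣ => x ^ n) → n = 1 := by
  refine ⟨aux_bad_set_infinite K p hp, fun n hn hall => ?_⟩
  by_contra hne
  obtain ⟨r, hr, hrdvd⟩ := Nat.exists_prime_and_dvd hne
  obtain ⟨v, hv⟩ := (aux_bad_set_infinite K r hr).nonempty
  refine hv fun y => ?_
  obtain ⟨x, hx⟩ := hall v y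
  refine ⟨x ^ (n / r), ?_⟩
  simpa [← pow_mul, Nat.div_mul_cancel hrdvd] using hx
end

section
/- Let 0 → N^∨ → ℤ^n → Q → 0 be a short exact sequence of abelian groups with N^∨ a finite free ℤ-module embedded via m ↦ (⟨m, v_i⟩)_{i=1,…,n} for vectors v_1,…,v_n in the dual lattice N. Then Q is torsion-free if and only if v_1,…,v_n generate N as a ℤ-module. -/
/-!
STATEMENT 15: Let `0 → N^∨ → ℤ^n → Q → 0` be a short exact sequence of abelian
groups, where `N` is a finite free `ℤ`-module and `N^∨ = Hom(N, ℤ)` is embedded via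
`m ↦ (⟨m, v_i⟩)_{i=1,…,n}` for vectors `v_1,…,v_n ∈ N`.  Then `Q` is torsion-free if
and only if `v_1,…,v_n` generate `N` as a `ℤ`-module.
-/

/-- The map `N^∨ → ℤ^n`, `m ↦ (⟨m, v_i⟩)_i`. -/
def dualPairingMap {ι N : Type*} [AddCommGroup N] [Module ℤ N] (v : ι → N) :
    Module.Dual ℤ N →ₗ[ℤ] (ι → ℤ) where
  toFun m := fun i => m (v i)
  map_add' x y := by funext i; simp
  map_smul' c x := by funext i; simp

lemma dvd_on_span {R N : Type*} [CommRing R] [AddCommGroup N] [Module R N] (c : R)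
    (m : Module.Dual R N) (s : Set N) (h : ∀ y ∈ s, c ∣ m y) :
    ∀ y ∈ Submodule.span R s, c ∣ m y := by
  intro y hy
  induction hy using Submodule.span_induction with
  | mem y hy => exact h y hy
  | zero => simp
  | add y z _ _ hy hz => rw [map_add]; exact dvd_add hy hz
  | smul r y _ hy => rw [map_smul, smul_eq_mul]; exact hy.mul_left r

lemma span_coe_basis {R N : Type*} [CommRing R] [AddCommGroup N] [Module R N]
    {M : Submodule R N} {k : ℕ} (bM : Module.Basis (Fin k) R M) :
    M = Submodule.span R (Set.range (fun i => (bM i : N))) := by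
  conv_lhs => rw [← Submodule.map_subtype_top M, ← bM.span_eq, Submodule.map_span]
  rw [← Set.range_comp]
  rfl

theorem torsionFree_cokernel_iff_span
    (n : ℕ) (N : Type*) [AddCommGroup N] [Module ℤ N]
    [Module.Free ℤ N] [Module.Finite ℤ N]
    (v : Fin n → N)
    (Q : Type*) [AddCommGroup Q] (g : (Fin n → ℤ) →+ Q)
    -- exactness of `0 → N^∨ → ℤ^n → Q → 0`:
    (hinj : Function.Injective (dualPairingMap v))
    (hsurj : Function.Surjective g)
    (hexact : ∀ x : Fin n → ℤ, g x = 0 ↔ ∃ m : Module.Dual ℤ N, dualPairingMap v m = x) :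
    (∀ (q : Q) (c : ℤ), c ≠ 0 → c • q = 0 → q = 0) ↔
      Submodule.span ℤ (Set.range v) = ⊤ := by
  constructor
  · intro htf
    set M := Submodule.span ℤ (Set.range v) with hM
    obtain ⟨k, bN', bM, f, a, ha⟩ := M.smithNormalForm (Module.Free.chooseBasis ℤ N)
    letI : Module ℤ ↥M := M.module
    have hcoe : M = Submodule.span ℤ (Set.range (fun i => (bM i : N))) := span_coe_basis bM
    have hvmem : ∀ j, v j ∈ M := fun j => Submodule.subset_span ⟨j, rfl⟩
    -- f is surjective
    have hfs : Function.Surjective f := by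
      intro i
      by_contra hi
      push_neg at hi
      have hzero : ∀ y ∈ M, (0 : ℤ) ∣ bN'.coord i y := by
        rw [hcoe]
        apply dvd_on_span
        rintro y ⟨j, rfl⟩
        show (0 : ℤ) ∣ bN'.coord i ((bM j : N))
        rw [ha j]
        simp [Module.Basis.coord_apply, Finsupp.single_apply, hi j]
      have h0 : dualPairingMap v (bN'.coord i) = dualPairingMap v 0 := by
        funext j
        simpa [dualPairingMap] using (zero_dvd_iff.mp (hzero _ (hvmem j)))
      have h0' := hinj h0
      have h1 : bN'.coord i (bN' i) = 1 := by simp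
      rw [h0'] at h1
      simp at h1
    -- each a i is a unit
    have hunit : ∀ i, IsUnit (a i) := by
      intro i
      set c := a i with hc
      set m := bN'.coord (f i) with hm
      have hdvd : ∀ y ∈ M, c ∣ m y := by
        rw [hcoe]
        apply dvd_on_span
        rintro y ⟨j, rfl⟩
        show c ∣ m ((bM j : N))
        rw [ha j, hm]
        by_cases hj : j = i
        · subst hj; simp [Module.Basis.coord_apply, ← hc]
        · simp [Module.Basis.coord_apply, Finsupp.single_apply, f.injective.eq_iff, hj]
      have hc0 : c ≠ 0 := by
        intro h0
        have hz : (bM i : N) = 0 := by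
          rw [ha i, ← hc, h0]; exact @zero_smul ℤ N _ _ (MulActionWithZero.toSMulWithZero ℤ N) (bN' (f i))
        exact bM.ne_zero i (Subtype.coe_injective hz)
      set x : Fin n → ℤ := fun j => m (v j) / c with hx
      have hcx : dualPairingMap v m = c • x := by
        funext j
        exact (Int.mul_ediv_cancel' (hdvd _ (hvmem j))).symm
      have hgx : c • g x = 0 := by
        rw [← map_zsmul g]
        exact (hexact _).mpr ⟨m, hcx⟩
      obtain ⟨m', hm'⟩ := (hexact x).mp (htf _ c hc0 hgx)
      have heq : dualPairingMap v (c • m') = dualPairingMap v m := by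
        rw [map_smul, hm', hcx]
      have hcm : c • m' = m := hinj heq
      have hone : c * m' (bN' (f i)) = 1 := by
        have := congrArg (fun φ : Module.Dual ℤ N => φ (bN' (f i))) hcm
        simpa [hm, smul_eq_mul] using this
      exact IsUnit.of_mul_eq_one _ hone
    -- conclude M = ⊤
    rw [eq_top_iff, ← bN'.span_eq, Submodule.span_le]
    rintro y ⟨j, rfl⟩
    obtain ⟨i, rfl⟩ := hfs j
    have hmem : (bM i : N) ∈ M := (bM i).2
    rw [ha i] at hmem
    rcases Int.isUnit_iff.mp (hunit i) with h1 | h1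
    · rw [h1] at hmem
      show bN' (f i) ∈ M
      convert hmem using 1
      exact (@one_smul ℤ N _ (inferInstance : Module ℤ N).toDistribMulAction.toMulAction (bN' (f i))).symm
    · rw [h1] at hmem
      show bN' (f i) ∈ M
      convert M.neg_mem hmem using 1
      rw [@neg_smul ℤ N _ _ (inferInstance : Module ℤ N), neg_neg,
        @one_smul ℤ N _ (inferInstance : Module ℤ N).toDistribMulAction.toMulAction]
  · intro hspan q c hc0 hcq
    obtain ⟨x, rfl⟩ := hsurj q
    have hg0 : g (c • x) = 0 := by rw [map_zsmul]; exact hcq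
    obtain ⟨m, hm⟩ := (hexact _).mp hg0
    have hdvd : ∀ y : N, c ∣ m y := by
      intro y
      refine dvd_on_span c m _ ?_ y (hspan ▸ Submodule.mem_top)
      rintro z ⟨j, rfl⟩
      exact ⟨x j, congrFun hm j⟩
    -- construct m' := m / c
    let m' : Module.Dual ℤ N :=
      { toFun := fun y => m y / c
        map_add' := by
          intro y z
          show m (y + z) / c = m y / c + m z / c
          obtain ⟨k1, hk1⟩ := hdvd y
          obtain ⟨k2, hk2⟩ := hdvd z
          rw [map_add, hk1, hk2, ← mul_add, Int.mul_ediv_cancel_left _ hc0,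
            Int.mul_ediv_cancel_left _ hc0, Int.mul_ediv_cancel_left _ hc0]
        map_smul' := by
          intro r y
          obtain ⟨k1, hk1⟩ := hdvd y
          simp only [RingHom.id_apply, smul_eq_mul, LinearMap.map_smul]
          rw [hk1, mul_left_comm r c k1,
            Int.mul_ediv_cancel_left _ hc0, Int.mul_ediv_cancel_left _ hc0] }
    apply (hexact x).mpr
    refine ⟨m', ?_⟩
    funext j
    show m (v j) / c = x j
    have hxj : m (v j) = c * x j := congrFun hm j
    rw [hxj, Int.mul_ediv_cancel_left _ hc0]
end
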